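/- Let β ≥ 1 and c ∈ (0,1) be constants. There exists a constant α = α(β,c) > 0 such that for all positive integers n ≥ d, any graph G on n vertices with separation profile s_G(r) ≤ β·r^c admits a partition V = A ⊔ B ⊔ C where A and B are each unions of pairwise disjoint, pairwise disconnected components of size at most d−1 (hence d-correctable), and |C| ≤ α·n/d^{2(1−c)}. -/
import Mathlib


open scoped Classical ComplexOrder
open Finset

/-- Outer boundary: vertices outside `U` adjacent to some vertex of `U`. -/
noncomputable def outerBoundary {V : Type*} [Fintype V] (G : SimpleGraph V) (U : Finset V) :
    Finset V :=
  Finset.univ.filter fun v => v ∉ U ∧ ∃ u ∈ U, G.Adj u v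

/-- Inner boundary: vertices of `U` adjacent to some vertex outside `U`. -/
noncomputable def innerBoundary {V : Type*} [Fintype V] (G : SimpleGraph V) (U : Finset V) :
    Finset V :=
  Finset.univ.filter fun u => u ∈ U ∧ ∃ v, v ∉ U ∧ G.Adj u v

/-- Two vertex sets are disconnected: no edge of `G` joins them. -/
def Disconn {V : Type*} (G : SimpleGraph V) (A B : Finset V) : Prop :=
  ∀ a ∈ A, ∀ b ∈ B, ¬ G.Adj a b

/-- A `d`-correctable family of a graph `G`: closed under subsets (Trivial), contains all
sets of size `< d` (Distance), closed under unions of pairwise disjoint pairwise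
disconnected members (Union), and closed under expansion (Expansion). -/
def IsCorrectableFamily {V : Type*} [Fintype V] [DecidableEq V] (G : SimpleGraph V) (d : ℕ)
    (F : Set (Finset V)) : Prop :=
  (∀ U ∈ F, ∀ W ⊆ U, W ∈ F) ∧
  (∀ U : Finset V, U.card < d → U ∈ F) ∧
  (∀ (ℓ : ℕ) (U : Fin ℓ → Finset V), (∀ i, U i ∈ F) →
    (∀ i j, i ≠ j → Disjoint (U i) (U j) ∧ Disconn G (U i) (U j)) →
    Finset.univ.biUnion U ∈ F) ∧
  (∀ U ∈ F, ∀ T ∈ F, outerBoundary G U ⊆ T → U ∪ T ∈ F)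

/-- A set is `d`-correctable with respect to `G` if it belongs to every
`d`-correctable family of `G`. -/
def IsCorrectableSet {V : Type*} [Fintype V] [DecidableEq V] (G : SimpleGraph V) (d : ℕ)
    (U : Finset V) : Prop :=
  ∀ F : Set (Finset V), IsCorrectableFamily G d F → U ∈ F

/-- The (induced subgraph on) `H` admits a 2/3-balanced separator of size at most `t`. -/
def SepUpTo {V : Type*} [DecidableEq V] (G : SimpleGraph V) (H : Finset V) (t : ℝ) : Prop :=
  ∃ T U₁ U₂ : Finset V, T ∪ U₁ ∪ U₂ = H ∧
    Disjoint T U₁ ∧ Disjoint T U₂ ∧ Disjoint U₁ U₂ ∧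
    Disconn G U₁ U₂ ∧
    3 * U₁.card ≤ 2 * H.card ∧ 3 * U₂.card ≤ 2 * H.card ∧
    (T.card : ℝ) ≤ t

/-- `G` has separation profile `s_G(r) ≤ β · r^c` for all `r`: every vertex subset `H`
admits a 2/3-balanced separator of size at most `β · |H|^c`. -/
def HasSepProfile {V : Type*} [DecidableEq V] (G : SimpleGraph V) (β c : ℝ) : Prop :=
  ∀ H : Finset V, SepUpTo G H (β * (H.card : ℝ) ^ c)

/-- `A` is a union of pairwise disjoint, pairwise disconnected components,
each of size at most `d - 1`. -/
def SmallComponents {V : Type*} [DecidableEq V] (G : SimpleGraph V) (d : ℕ)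
    (A : Finset V) : Prop :=
  ∃ (ℓ : ℕ) (U : Fin ℓ → Finset V), A = Finset.univ.biUnion U ∧
    (∀ i, (U i).card < d) ∧
    ∀ i j, i ≠ j → Disjoint (U i) (U j) ∧ Disconn G (U i) (U j)


noncomputable def lamc (c : ℝ) : ℝ := ((3:ℝ)/2) ^ (1 - c)
noncomputable def Bcon (c : ℝ) : ℝ := 2 / (lamc c - 1)
noncomputable def Acon (c : ℝ) : ℝ := 3 * (1 + Bcon c) + Bcon c * lamc c

lemma lamc_gt_one {c : ℝ} (hc1 : c < 1) : 1 < lamc c := by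
  rw [lamc, Real.one_lt_rpow_iff_of_pos (by norm_num)]
  exact Or.inl ⟨by norm_num, by linarith⟩

lemma Bcon_pos {c : ℝ} (hc1 : c < 1) : 0 < Bcon c :=
  div_pos two_pos (by linarith [lamc_gt_one hc1])

lemma Bcon_mul {c : ℝ} (hc1 : c < 1) : Bcon c * (lamc c - 1) = 2 :=
  div_mul_cancel₀ 2 (by linarith [lamc_gt_one hc1])

lemma Acon_pos {c : ℝ} (hc1 : c < 1) : 0 < Acon c := by
  have h1 := lamc_gt_one hc1
  have h2 := Bcon_pos hc1
  have : 0 < Bcon c * lamc c := by positivity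
  rw [Acon]; linarith

lemma arith_main (β c : ℝ) (hβ : 1 ≤ β) (hc0 : 0 < c) (hc1 : c < 1)
    (dr m m1 m2 t s1 s2 : ℝ)
    (hdr : 1 ≤ dr) (hdm : dr ≤ m)
    (hsum : t + m1 + m2 = m)
    (hb1 : 3 * m1 ≤ 2 * m) (hb2 : 3 * m2 ≤ 2 * m)
    (hm1 : 0 ≤ m1) (hm2 : 0 ≤ m2) (ht0 : 0 ≤ t)
    (ht : t ≤ β * m ^ c)
    (hs1 : s1 ≤ 0 ∨ (dr ≤ m1 ∧ s1 ≤ β * (Acon c * m1 * dr ^ (c-1) - Bcon c * m1 ^ c)))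
    (hs2 : s2 ≤ 0 ∨ (dr ≤ m2 ∧ s2 ≤ β * (Acon c * m2 * dr ^ (c-1) - Bcon c * m2 ^ c))) :
    t + s1 + s2 ≤ β * (Acon c * m * dr ^ (c-1) - Bcon c * m ^ c) := by
  have hL := lamc_gt_one hc1
  have hB := Bcon_pos hc1
  have hBL2 := Bcon_mul hc1
  have hβ0 : (0:ℝ) < β := by linarith
  have hm0 : (0:ℝ) < m := by linarith
  have hdr0 : (0:ℝ) < dr := by linarith
  have hD0 : (0:ℝ) ≤ dr ^ (c-1) := Real.rpow_nonneg hdr0.le _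
  have hM0 : (0:ℝ) ≤ m ^ (c-1) := Real.rpow_nonneg hm0.le _
  have hmc0 : (0:ℝ) ≤ m ^ c := Real.rpow_nonneg hm0.le _
  have hc1' : c - 1 ≤ 0 := by linarith
  have e4 : m ^ (c-1) ≤ dr ^ (c-1) := Real.rpow_le_rpow_of_nonpos hdr0 hdm hc1'
  have e3 : ∀ x : ℝ, 0 < x → x * x ^ (c-1) = x ^ c := by
    intro x hx
    rw [show x * x ^ (c-1) = x ^ (1:ℝ) * x ^ (c-1) by rw [Real.rpow_one],
      ← Real.rpow_add hx, show (1:ℝ) + (c-1) = c by ring]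
  have hmd : m ^ c ≤ m * dr ^ (c-1) := by
    rw [← e3 m hm0]; exact mul_le_mul_of_nonneg_left e4 hm0.le
  have hBL0 : 0 ≤ Bcon c * lamc c := by positivity
  have hA2 : 3 * (1 + Bcon c) ≤ Acon c := by rw [Acon]; linarith
  have hA1 : 1 + Bcon c ≤ Acon c := by rw [Acon]; linarith
  have hA3 : Bcon c * lamc c ≤ Acon c := by rw [Acon]; linarith
  have hA0 : 0 ≤ Acon c := le_trans (by linarith) hA1
  -- helper for the one-big cases
  have onebig : ∀ x sx : ℝ, dr ≤ x → 3 * x ≤ 2 * m →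
      sx ≤ β * (Acon c * x * dr ^ (c-1) - Bcon c * x ^ c) →
      t + sx ≤ β * (Acon c * m * dr ^ (c-1) - Bcon c * m ^ c) := by
    intro x sx hdx hbx hsx
    have hx0 : 0 ≤ x := le_trans hdr0.le hdx
    have k0 : (1 + Bcon c) * m ≤ Acon c * (m - x) := by nlinarith
    have k1 : (1 + Bcon c) * m ^ c ≤ Acon c * (m - x) * dr ^ (c-1) := by
      calc (1 + Bcon c) * m ^ c ≤ (1 + Bcon c) * (m * dr ^ (c-1)) :=
            mul_le_mul_of_nonneg_left hmd (by linarith)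
        _ = ((1 + Bcon c) * m) * dr ^ (c-1) := by ring
        _ ≤ (Acon c * (m - x)) * dr ^ (c-1) := mul_le_mul_of_nonneg_right k0 hD0
    have k2 := mul_le_mul_of_nonneg_left k1 hβ0.le
    have k3 : 0 ≤ β * (Bcon c * x ^ c) := by
      have := Real.rpow_nonneg hx0 c
      positivity
    linarith [k2, k3, ht, hsx]
  rcases hs1 with h1 | ⟨hd1, h1⟩ <;> rcases hs2 with h2 | ⟨hd2, h2⟩
  · -- both small
    have k1 : (1 + Bcon c) * m ^ c ≤ Acon c * (m * dr ^ (c-1)) := by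
      calc (1 + Bcon c) * m ^ c ≤ (1 + Bcon c) * (m * dr ^ (c-1)) :=
            mul_le_mul_of_nonneg_left hmd (by linarith)
        _ ≤ Acon c * (m * dr ^ (c-1)) :=
            mul_le_mul_of_nonneg_right hA1 (by positivity)
    have k2 := mul_le_mul_of_nonneg_left k1 hβ0.le
    linarith [k2, ht, h1, h2]
  · linarith [onebig m2 s2 hd2 hb2 h2, h1]
  · linarith [onebig m1 s1 hd1 hb1 h1, h2]
  · -- both big
    have hm10 : (0:ℝ) < m1 := lt_of_lt_of_le hdr0 hd1
    have hm20 : (0:ℝ) < m2 := lt_of_lt_of_le hdr0 hd2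
    have l23 : ((2:ℝ)/3) ^ (c-1) = lamc c := by
      rw [lamc, show ((2:ℝ)/3) = ((3:ℝ)/2)⁻¹ by norm_num,
        Real.inv_rpow (by norm_num : (0:ℝ) ≤ 3/2),
        ← Real.rpow_neg (by norm_num : (0:ℝ) ≤ 3/2), show -(c-1) = 1-c by ring]
    have key : ∀ x : ℝ, dr ≤ x → 3 * x ≤ 2 * m → lamc c * (x * m ^ (c-1)) ≤ x ^ c := by
      intro x hdx hbx
      have hx0 : (0:ℝ) < x := lt_of_lt_of_le hdr0 hdx
      have hxle : x ≤ 2 * m / 3 := by linarith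
      have h2 : (2 * m / 3) ^ (c-1) ≤ x ^ (c-1) :=
        Real.rpow_le_rpow_of_nonpos hx0 hxle hc1'
      have h4 : ((2:ℝ)/3 * m) ^ (c-1) = ((2:ℝ)/3) ^ (c-1) * m ^ (c-1) :=
        Real.mul_rpow (by norm_num) hm0.le
      calc lamc c * (x * m ^ (c-1)) = x * (((2:ℝ)/3) ^ (c-1) * m ^ (c-1)) := by
            rw [l23]; ring
        _ = x * ((2 * m / 3) ^ (c-1)) := by rw [show 2*m/3 = (2:ℝ)/3 * m by ring, h4]
        _ ≤ x * x ^ (c-1) := mul_le_mul_of_nonneg_left h2 hx0.le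
        _ = x ^ c := e3 x hx0
    have g1 : β * Bcon c * (lamc c * (m1 * m ^ (c-1))) ≤ β * Bcon c * m1 ^ c :=
      mul_le_mul_of_nonneg_left (key m1 hd1 hb1) (by positivity)
    have g2 : β * Bcon c * (lamc c * (m2 * m ^ (c-1))) ≤ β * Bcon c * m2 ^ c :=
      mul_le_mul_of_nonneg_left (key m2 hd2 hb2) (by positivity)
    have f3 : β * (Bcon c * lamc c) * t * m ^ (c-1) ≤ β * (Bcon c * lamc c) * t * dr ^ (c-1) :=
      mul_le_mul_of_nonneg_left e4 (by positivity)
    have f4 : β * (Bcon c * lamc c) * t * dr ^ (c-1) ≤ β * Acon c * t * dr ^ (c-1) := by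
      have h0 : 0 ≤ β * t * dr ^ (c-1) := by positivity
      have h := mul_le_mul_of_nonneg_right hA3 h0
      nlinarith [h]
    have h2eq : β * (Bcon c * (lamc c - 1)) * m ^ c = 2 * β * m ^ c := by rw [hBL2]; ring
    have hsumA : β * Acon c * t * dr ^ (c-1) + β * Acon c * m1 * dr ^ (c-1)
        + β * Acon c * m2 * dr ^ (c-1) = β * Acon c * m * dr ^ (c-1) := by
      rw [← hsum]; ring
    have hsumL : β * (Bcon c * lamc c) * t * m ^ (c-1) + β * (Bcon c * lamc c) * m1 * m ^ (c-1)
        + β * (Bcon c * lamc c) * m2 * m ^ (c-1) = β * (Bcon c * lamc c) * m * m ^ (c-1) := by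
      rw [← hsum]; ring
    have e3s : β * (Bcon c * lamc c) * m * m ^ (c-1) = β * (Bcon c * lamc c) * m ^ c := by
      rw [show β * (Bcon c * lamc c) * m * m ^ (c-1) = β * (Bcon c * lamc c) * (m * m ^ (c-1)) by ring,
        e3 m hm0]
    have hβmc : 0 ≤ β * m ^ c := by positivity
    linarith [h1, h2, ht, g1, g2, f3, f4, h2eq, hsumA, hsumL, e3s, hβmc]

lemma disconn_mono {V : Type*} {G : SimpleGraph V} {A B A' B' : Finset V}
    (h : Disconn G A B) (hA : A' ⊆ A) (hB : B' ⊆ B) : Disconn G A' B' :=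
  fun a ha b hb => h a (hA ha) b (hB hb)

lemma disconn_symm {V : Type*} {G : SimpleGraph V} {A B : Finset V}
    (h : Disconn G A B) : Disconn G B A :=
  fun b hb a ha hadj => h a ha b hb hadj.symm

lemma smallComponents_of_small {V : Type*} [DecidableEq V] (G : SimpleGraph V) {d : ℕ}
    {X : Finset V} (h : X.card < d) : SmallComponents G d X :=
  ⟨1, fun _ => X, by ext a; simp, fun _ => h,
    fun i j hij => absurd (Subsingleton.elim i j) hij⟩

lemma smallComponents_union {V : Type*} [DecidableEq V] (G : SimpleGraph V) {d : ℕ}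
    {X Y : Finset V} (hX : SmallComponents G d X) (hY : SmallComponents G d Y)
    (hdisj : Disjoint X Y) (hdisc : Disconn G X Y) : SmallComponents G d (X ∪ Y) := by
  obtain ⟨l₁, W₁, hXe, hW₁, hp₁⟩ := hX
  obtain ⟨l₂, W₂, hYe, hW₂, hp₂⟩ := hY
  have hsub₁ : ∀ j : Fin l₁, W₁ j ⊆ X := by
    intro j; rw [hXe]; exact Finset.subset_biUnion_of_mem W₁ (Finset.mem_univ j)
  have hsub₂ : ∀ j : Fin l₂, W₂ j ⊆ Y := by
    intro j; rw [hYe]; exact Finset.subset_biUnion_of_mem W₂ (Finset.mem_univ j)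
  refine ⟨l₁ + l₂,
    fun i => if h : (i : ℕ) < l₁ then W₁ ⟨i, h⟩ else W₂ ⟨(i : ℕ) - l₁, by omega⟩, ?_, ?_, ?_⟩
  · ext a
    simp only [Finset.mem_union, Finset.mem_biUnion, Finset.mem_univ, true_and]
    constructor
    · rintro (h | h)
      · rw [hXe] at h
        simp only [Finset.mem_biUnion, Finset.mem_univ, true_and] at h
        obtain ⟨j, hj⟩ := h
        refine ⟨⟨(j : ℕ), by omega⟩, ?_⟩
        rw [dif_pos j.isLt]
        simpa using hj
      · rw [hYe] at h
        simp only [Finset.mem_biUnion, Finset.mem_univ, true_and] at h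
        obtain ⟨j, hj⟩ := h
        refine ⟨⟨l₁ + (j : ℕ), by omega⟩, ?_⟩
        rw [dif_neg (Nat.not_lt.mpr (Nat.le_add_right l₁ (j : ℕ)))]
        convert hj using 2
        exact Fin.ext (by simp)
    · rintro ⟨i, hi⟩
      by_cases h : (i : ℕ) < l₁
      · rw [dif_pos h] at hi
        exact Or.inl (hsub₁ _ hi)
      · rw [dif_neg h] at hi
        exact Or.inr (hsub₂ _ hi)
  · intro i
    dsimp only
    by_cases h : (i : ℕ) < l₁
    · rw [dif_pos h]; exact hW₁ _
    · rw [dif_neg h]; exact hW₂ _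
  · intro i j hij
    dsimp only
    by_cases hi : (i : ℕ) < l₁ <;> by_cases hj : (j : ℕ) < l₁
    · rw [dif_pos hi, dif_pos hj]
      refine hp₁ ⟨i, hi⟩ ⟨j, hj⟩ ?_
      simp only [ne_eq, Fin.mk.injEq]
      intro h; exact hij (Fin.ext h)
    · rw [dif_pos hi, dif_neg hj]
      exact ⟨hdisj.mono (hsub₁ _) (hsub₂ _), disconn_mono hdisc (hsub₁ _) (hsub₂ _)⟩
    · rw [dif_neg hi, dif_pos hj]
      exact ⟨(hdisj.mono (hsub₁ _) (hsub₂ _)).symm,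
        disconn_mono (disconn_symm hdisc) (hsub₂ _) (hsub₁ _)⟩
    · rw [dif_neg hi, dif_neg hj]
      refine hp₂ ⟨(i : ℕ) - l₁, by omega⟩ ⟨(j : ℕ) - l₁, by omega⟩ ?_
      simp only [ne_eq, Fin.mk.injEq]
      have : (i : ℕ) ≠ (j : ℕ) := fun h => hij (Fin.ext h)
      omega

lemma smallComponents_correctable {V : Type*} [Fintype V] [DecidableEq V]
    {G : SimpleGraph V} {d : ℕ} {A : Finset V} (h : SmallComponents G d A) :
    IsCorrectableSet G d A := by
  obtain ⟨l, U, rfl, hU, hp⟩ := h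
  intro F hF
  exact hF.2.2.1 l U (fun i => hF.2.1 _ (hU i)) hp

set_option maxHeartbeats 1000000 in
lemma decomp (β c : ℝ) (hβ : 1 ≤ β) (hc0 : 0 < c) (hc1 : c < 1)
    {V : Type} [Fintype V] [DecidableEq V] (G : SimpleGraph V) {d : ℕ} (hd : 1 ≤ d)
    (hsep : HasSepProfile G β c) :
    ∀ (n : ℕ) (H : Finset V), H.card ≤ n →
      ∃ S : Finset V, S ⊆ H ∧ SmallComponents G d (H \ S) ∧
        ((H.card < d ∧ S = ∅) ∨
         (d ≤ H.card ∧
          (S.card : ℝ) ≤ β * (Acon c * H.card * (d:ℝ) ^ (c-1) - Bcon c * (H.card:ℝ) ^ c))) := by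
  have base : ∀ H : Finset V, H.card < d →
      ∃ S : Finset V, S ⊆ H ∧ SmallComponents G d (H \ S) ∧
        ((H.card < d ∧ S = ∅) ∨
         (d ≤ H.card ∧
          (S.card : ℝ) ≤ β * (Acon c * H.card * (d:ℝ) ^ (c-1) - Bcon c * (H.card:ℝ) ^ c))) :=
    fun H h => ⟨∅, Finset.empty_subset _,
      by rw [Finset.sdiff_empty]; exact smallComponents_of_small G h, Or.inl ⟨h, rfl⟩⟩
  intro n
  induction n with
  | zero => exact fun H hH => base H (by omega)
  | succ n ih =>
    intro H hH
    by_cases hsmall : H.card < d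
    · exact base H hsmall
    · push_neg at hsmall
      obtain ⟨T, U₁, U₂, hHeq, hTU₁, hTU₂, hU₁₂, hdisc, hb1, hb2, hTcard⟩ := hsep H
      have hTH : T ⊆ H := by rw [← hHeq]; exact subset_union_left.trans subset_union_left
      have hU₁H : U₁ ⊆ H := by rw [← hHeq]; exact subset_union_right.trans subset_union_left
      have hU₂H : U₂ ⊆ H := by rw [← hHeq]; exact subset_union_right
      have hlt₁ : U₁.card < H.card := by omega
      have hlt₂ : U₂.card < H.card := by omega
      obtain ⟨S₁, hS₁sub, hSC₁, hbd₁⟩ := ih U₁ (by omega)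
      obtain ⟨S₂, hS₂sub, hSC₂, hbd₂⟩ := ih U₂ (by omega)
      refine ⟨T ∪ S₁ ∪ S₂,
        Finset.union_subset (Finset.union_subset hTH (hS₁sub.trans hU₁H)) (hS₂sub.trans hU₂H),
        ?_, Or.inr ⟨hsmall, ?_⟩⟩
      · have hkey : H \ (T ∪ S₁ ∪ S₂) = (U₁ \ S₁) ∪ (U₂ \ S₂) := by
          ext a
          have k1 : a ∈ U₁ → a ∉ U₂ := fun h => Finset.disjoint_left.mp hU₁₂ h
          have k2 : a ∈ T → a ∉ U₁ := fun h => Finset.disjoint_left.mp hTU₁ h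
          have k3 : a ∈ T → a ∉ U₂ := fun h => Finset.disjoint_left.mp hTU₂ h
          have k4 : a ∈ S₁ → a ∈ U₁ := fun h => hS₁sub h
          have k5 : a ∈ S₂ → a ∈ U₂ := fun h => hS₂sub h
          simp only [Finset.mem_sdiff, Finset.mem_union, ← hHeq]
          tauto
        rw [hkey]
        exact smallComponents_union G hSC₁ hSC₂
          (hU₁₂.mono Finset.sdiff_subset Finset.sdiff_subset)
          (disconn_mono hdisc Finset.sdiff_subset Finset.sdiff_subset)
      · have hcard : (T ∪ S₁ ∪ S₂).card ≤ T.card + S₁.card + S₂.card := by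
          calc (T ∪ S₁ ∪ S₂).card ≤ (T ∪ S₁).card + S₂.card := Finset.card_union_le _ _
            _ ≤ T.card + S₁.card + S₂.card := by linarith [Finset.card_union_le T S₁]
        have hsum : T.card + U₁.card + U₂.card = H.card := by
          rw [← hHeq, Finset.card_union_of_disjoint, Finset.card_union_of_disjoint hTU₁]
          exact Finset.disjoint_union_left.mpr ⟨hTU₂, hU₁₂⟩
        have harith := arith_main β c hβ hc0 hc1 (d:ℝ) (H.card : ℝ) (U₁.card : ℝ)
          (U₂.card : ℝ) (T.card : ℝ) (S₁.card : ℝ) (S₂.card : ℝ)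
          (by exact_mod_cast hd) (by exact_mod_cast hsmall)
          (by exact_mod_cast hsum) (by exact_mod_cast hb1) (by exact_mod_cast hb2)
          (by positivity) (by positivity) (by positivity) hTcard
          (by
            rcases hbd₁ with ⟨_, rfl⟩ | ⟨hdl, hb⟩
            · exact Or.inl (by simp)
            · exact Or.inr ⟨by exact_mod_cast hdl, hb⟩)
          (by
            rcases hbd₂ with ⟨_, rfl⟩ | ⟨hdl, hb⟩
            · exact Or.inl (by simp)
            · exact Or.inr ⟨by exact_mod_cast hdl, hb⟩)
        have hcard' : ((T ∪ S₁ ∪ S₂).card : ℝ) ≤ (T.card : ℝ) + S₁.card + S₂.card := by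
          exact_mod_cast hcard
        linarith [harith, hcard']

lemma decomp' (β c : ℝ) (hβ : 1 ≤ β) (hc0 : 0 < c) (hc1 : c < 1)
    {V : Type} [Fintype V] [DecidableEq V] (G : SimpleGraph V) {d : ℕ} (hd : 1 ≤ d)
    (hsep : HasSepProfile G β c) (H : Finset V) :
    ∃ S : Finset V, S ⊆ H ∧ SmallComponents G d (H \ S) ∧
      (S.card : ℝ) ≤ β * Acon c * (H.card : ℝ) * (d:ℝ) ^ (c-1) := by
  obtain ⟨S, hsub, hsc, hbd⟩ := decomp β c hβ hc0 hc1 G hd hsep H.card H le_rfl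
  refine ⟨S, hsub, hsc, ?_⟩
  have hd0 : (0:ℝ) < (d:ℝ) := by exact_mod_cast hd
  have hD0 : (0:ℝ) ≤ (d:ℝ) ^ (c-1) := Real.rpow_nonneg hd0.le _
  have hA0 : (0:ℝ) ≤ Acon c := (Acon_pos hc1).le
  rcases hbd with ⟨_, rfl⟩ | ⟨_, hb⟩
  · simp only [Finset.card_empty, Nat.cast_zero]
    positivity
  · have h0 : (0:ℝ) ≤ β * (Bcon c * (H.card : ℝ) ^ c) := by
      have := (Bcon_pos hc1).le
      have := Real.rpow_nonneg (Nat.cast_nonneg H.card) c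
      positivity
    nlinarith [hb, h0]

/-- For `β ≥ 1`, `c ∈ (0,1)` there is `α = α(β,c) > 0` such that any graph
on `n ≥ d` vertices with separation profile `s_G(r) ≤ β r^c` admits a partition
`V = A ⊔ B ⊔ C` where `A` and `B` are unions of pairwise disjoint pairwise disconnected
components of size at most `d − 1` (hence `d`-correctable), and `|C| ≤ α n / d^{2(1−c)}`. -/
theorem abc_partition_weak (β c : ℝ) (hβ : 1 ≤ β) (hc0 : 0 < c) (hc1 : c < 1) :
    ∃ α : ℝ, 0 < α ∧
      ∀ (V : Type) (_ : Fintype V) (_ : DecidableEq V) (G : SimpleGraph V) (d : ℕ),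
        1 ≤ d → d ≤ Fintype.card V → HasSepProfile G β c →
        ∃ A B C : Finset V,
          A ∪ B ∪ C = Finset.univ ∧
          Disjoint A B ∧ Disjoint A C ∧ Disjoint B C ∧
          SmallComponents G d A ∧ SmallComponents G d B ∧
          IsCorrectableSet G d A ∧ IsCorrectableSet G d B ∧
          ((C.card : ℝ) ≤ α * (Fintype.card V) / (d : ℝ) ^ (2 * (1 - c))) := by
  have hβ0 : (0:ℝ) < β := by linarith
  refine ⟨(β * Acon c) ^ 2, pow_pos (mul_pos hβ0 (Acon_pos hc1)) 2, ?_⟩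
  intro V _ _ G d hd hdn hsep
  obtain ⟨S₁, hS₁sub, hSC₁, hb1⟩ := decomp' β c hβ hc0 hc1 G hd hsep Finset.univ
  obtain ⟨S₂, hS₂sub, hSC₂, hb2⟩ := decomp' β c hβ hc0 hc1 G hd hsep S₁
  simp only [Finset.card_univ] at hb1
  refine ⟨Finset.univ \ S₁, S₁ \ S₂, S₂, ?_, ?_, ?_, Finset.sdiff_disjoint,
    hSC₁, hSC₂, smallComponents_correctable hSC₁, smallComponents_correctable hSC₂, ?_⟩
  · ext a
    simp only [Finset.mem_union, Finset.mem_sdiff, Finset.mem_univ, true_and, iff_true]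
    tauto
  · exact Finset.disjoint_left.mpr fun a ha hb =>
      (Finset.mem_sdiff.mp ha).2 (Finset.mem_sdiff.mp hb).1
  · exact Finset.disjoint_left.mpr fun a ha hb =>
      (Finset.mem_sdiff.mp ha).2 (hS₂sub hb)
  · have hd0 : (0:ℝ) < (d:ℝ) := by exact_mod_cast hd
    have hD0 : (0:ℝ) ≤ (d:ℝ) ^ (c-1) := Real.rpow_nonneg hd0.le _
    have hBA : (0:ℝ) ≤ β * Acon c := (mul_pos hβ0 (Acon_pos hc1)).le
    have hDD : (d:ℝ) ^ (c-1) * (d:ℝ) ^ (c-1) = (d:ℝ) ^ (2*(c-1)) := by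
      rw [← Real.rpow_add hd0]; ring_nf
    have final : (S₂.card : ℝ) ≤ (β * Acon c) ^ 2 * (Fintype.card V) * (d:ℝ) ^ (2*(c-1)) := by
      calc (S₂.card : ℝ) ≤ β * Acon c * (S₁.card : ℝ) * (d:ℝ) ^ (c-1) := hb2
        _ ≤ β * Acon c * (β * Acon c * (Fintype.card V) * (d:ℝ) ^ (c-1)) * (d:ℝ) ^ (c-1) := by
            exact mul_le_mul_of_nonneg_right (mul_le_mul_of_nonneg_left hb1 hBA) hD0
        _ = (β * Acon c) ^ 2 * (Fintype.card V) * ((d:ℝ) ^ (c-1) * (d:ℝ) ^ (c-1)) := by ring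
        _ = (β * Acon c) ^ 2 * (Fintype.card V) * (d:ℝ) ^ (2*(c-1)) := by rw [hDD]
    have hrw : (β * Acon c) ^ 2 * (Fintype.card V) / (d : ℝ) ^ (2 * (1 - c))
        = (β * Acon c) ^ 2 * (Fintype.card V) * (d:ℝ) ^ (2*(c-1)) := by
      rw [show (2*(1-c)) = -(2*(c-1)) by ring, Real.rpow_neg hd0.le, div_inv_eq_mul]
    rw [hrw]
    exact final
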